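/- If B is a γ-contraction on a complete normed space (γ ∈ (0,1)) and λ ∈ [0,1), then the operator B_λ = (1-λ) Σ_{n≥0} λ^n B^{n+1} is a ((1-λ)γ/(1-λγ))-contraction. -/

import Mathlib

theorem stmt_0
    {X : Type*} [NormedAddCommGroup X] [NormedSpace ℝ X] [CompleteSpace X]
    (B : X → X) (γ lam : ℝ) (hγ0 : 0 < γ) (hγ1 : γ < 1)
    (hlam0 : 0 ≤ lam) (hlam1 : lam < 1)
    (hB : ∀ x y : X, ‖B x - B y‖ ≤ γ * ‖x - y‖)
    (Blam : X → X)
    (hBlam : ∀ x : X, Blam x = (1 - lam) • ∑' n : ℕ, lam ^ n • B^[n + 1] x) :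
    ∀ x y : X, ‖Blam x - Blam y‖ ≤ ((1 - lam) * γ / (1 - lam * γ)) * ‖x - y‖ := by
  intro x y
  -- iterate contraction bound
  have hiter : ∀ (n : ℕ) (a b : X), ‖B^[n] a - B^[n] b‖ ≤ γ ^ n * ‖a - b‖ := by
    intro n
    induction n with
    | zero => intro a b; simp
    | succ n ih =>
      intro a b
      rw [Function.iterate_succ_apply', Function.iterate_succ_apply']
      calc ‖B (B^[n] a) - B (B^[n] b)‖ ≤ γ * ‖B^[n] a - B^[n] b‖ := hB _ _
        _ ≤ γ * (γ ^ n * ‖a - b‖) := by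
            exact mul_le_mul_of_nonneg_left (ih a b) hγ0.le
        _ = γ ^ (n + 1) * ‖a - b‖ := by ring
  -- bound on orbit of 0
  set M := ‖B 0‖ / (1 - γ) with hM
  have hγ1' : 0 < 1 - γ := by linarith
  have horbit : ∀ n : ℕ, ‖B^[n] (0 : X)‖ ≤ M := by
    intro n
    induction n with
    | zero =>
      simp [hM]
      positivity
    | succ n ih =>
      rw [Function.iterate_succ_apply']
      have h1 : ‖B (B^[n] 0) - B 0‖ ≤ γ * ‖B^[n] (0:X) - 0‖ := hB _ _
      have h2 : ‖B (B^[n] (0:X))‖ ≤ ‖B (B^[n] 0) - B 0‖ + ‖B (0:X)‖ := by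
        have := norm_sub_norm_le (B (B^[n] (0:X))) (B 0)
        linarith [norm_sub_norm_le (B (B^[n] (0:X))) (B (0:X))]
      have h3 : γ * ‖B^[n] (0:X) - 0‖ ≤ γ * M := by
        have : ‖B^[n] (0:X) - 0‖ = ‖B^[n] (0:X)‖ := by simp
        rw [this]; exact mul_le_mul_of_nonneg_left ih hγ0.le
      have hMeq : γ * M + ‖B (0:X)‖ = M := by
        have hne := hγ1'.ne'
        rw [hM, mul_div_assoc', div_add' _ _ _ hne, div_left_inj' hne]
        ring
      linarith
  -- summability
  have hsum : ∀ a : X, Summable (fun n : ℕ => lam ^ n • B^[n + 1] a) := by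
    intro a
    apply Summable.of_norm_bounded (g := fun n => lam ^ n * (‖a‖ + M))
    · exact (summable_geometric_of_lt_one hlam0 hlam1).mul_right _
    · intro n
      rw [norm_smul, Real.norm_eq_abs, abs_of_nonneg (pow_nonneg hlam0 n)]
      apply mul_le_mul_of_nonneg_left _ (pow_nonneg hlam0 n)
      have h1 : ‖B^[n+1] a - B^[n+1] 0‖ ≤ γ ^ (n+1) * ‖a - 0‖ := hiter _ _ _
      have h2 : γ ^ (n+1) * ‖a‖ ≤ ‖a‖ := by
        have : γ ^ (n+1) ≤ 1 := pow_le_one₀ hγ0.le hγ1.le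
        nlinarith [norm_nonneg a]
      have := horbit (n+1)
      have h3 : ‖B^[n+1] a‖ ≤ ‖B^[n+1] a - B^[n+1] 0‖ + ‖B^[n+1] (0:X)‖ := by
        simpa using norm_add_le (B^[n+1] a - B^[n+1] 0) (B^[n+1] (0:X))
      simp only [sub_zero] at h1
      linarith
  -- rewrite difference
  have hdiff : Blam x - Blam y
      = (1 - lam) • ∑' n : ℕ, lam ^ n • (B^[n + 1] x - B^[n + 1] y) := by
    rw [hBlam, hBlam, ← smul_sub, ← Summable.tsum_sub (hsum x) (hsum y)]
    congr 1
    exact tsum_congr fun n => (smul_sub _ _ _).symm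
  rw [hdiff, norm_smul, Real.norm_eq_abs, abs_of_nonneg (by linarith : (0:ℝ) ≤ 1 - lam)]
  have hlg0 : 0 ≤ lam * γ := mul_nonneg hlam0 hγ0.le
  have hlg1 : lam * γ < 1 := by nlinarith
  have hnorm : ‖∑' n : ℕ, lam ^ n • (B^[n + 1] x - B^[n + 1] y)‖
      ≤ ∑' n : ℕ, (lam * γ) ^ n * (γ * ‖x - y‖) := by
    apply tsum_of_norm_bounded
    · exact ((summable_geometric_of_lt_one hlg0 hlg1).mul_right _).hasSum
    · intro n
      rw [norm_smul, Real.norm_eq_abs, abs_of_nonneg (pow_nonneg hlam0 n)]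
      calc lam ^ n * ‖B^[n+1] x - B^[n+1] y‖ ≤ lam ^ n * (γ ^ (n+1) * ‖x - y‖) :=
            mul_le_mul_of_nonneg_left (hiter _ _ _) (pow_nonneg hlam0 n)
        _ = (lam * γ) ^ n * (γ * ‖x - y‖) := by rw [mul_pow]; ring
  have htsum : ∑' n : ℕ, (lam * γ) ^ n * (γ * ‖x - y‖)
      = (1 - lam * γ)⁻¹ * (γ * ‖x - y‖) := by
    rw [tsum_mul_right, tsum_geometric_of_lt_one hlg0 hlg1]
  rw [htsum] at hnorm
  calc (1 - lam) * ‖∑' n : ℕ, lam ^ n • (B^[n + 1] x - B^[n + 1] y)‖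
      ≤ (1 - lam) * ((1 - lam * γ)⁻¹ * (γ * ‖x - y‖)) :=
        mul_le_mul_of_nonneg_left hnorm (by linarith)
    _ = (1 - lam) * γ / (1 - lam * γ) * ‖x - y‖ := by
        field_simp
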